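/- Every nonempty connected P5-free graph G has a dominating set D such that the induced subgraph G[D] is either isomorphic to the path on three vertices P3 or is a clique. -/

import Mathlib

open SimpleGraph

/-- A graph is `P₅`-free if it contains no induced subgraph isomorphic to the
path on five vertices (i.e. no graph embedding of `pathGraph 5`). -/
def P5Free {V : Type*} (G : SimpleGraph V) : Prop :=
  IsEmpty (SimpleGraph.pathGraph 5 ↪g G)

lemma no_p5aux {V : Type*} {G : SimpleGraph V} (hP5 : P5Free G) {v0 v1 v2 v3 v4 : V}
    (h01 : G.Adj v0 v1) (h12 : G.Adj v1 v2) (h23 : G.Adj v2 v3) (h34 : G.Adj v3 v4)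
    (n02 : ¬G.Adj v0 v2) (n03 : ¬G.Adj v0 v3) (n04 : ¬G.Adj v0 v4)
    (n13 : ¬G.Adj v1 v3) (n14 : ¬G.Adj v1 v4) (n24 : ¬G.Adj v2 v4) : False := by
  have e02 : v0 ≠ v2 := fun h => n03 (h ▸ h23)
  have e03 : v0 ≠ v3 := fun h => n04 (h ▸ h34)
  have e04 : v0 ≠ v4 := fun h => n14 (by rw [h] at h01; exact h01.symm)
  have e13 : v1 ≠ v3 := fun h => n14 (h ▸ h34)
  have e14 : v1 ≠ v4 := fun h => n04 (h ▸ h01)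
  have e24 : v2 ≠ v4 := fun h => n14 (by rw [h] at h12; exact h12)
  have e01 := h01.ne; have e12 := h12.ne; have e23 := h23.ne; have e34 := h34.ne
  let f : Fin 5 → V := ![v0, v1, v2, v3, v4]
  have hinj : Function.Injective f := by
    intro i j hij
    fin_cases i <;> fin_cases j <;> simp_all [f] <;>
      first
      | rfl
      | exact absurd hij (by assumption)
      | exact absurd hij.symm (by assumption)
  exact hP5.elim ⟨⟨f, hinj⟩, by
    intro i j
    fin_cases i <;> fin_cases j <;> simp only [f, pathGraph_adj] <;>
      first
        | exact iff_of_false (G.irrefl) (by decide)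
        | exact iff_of_true h01 (by decide) | exact iff_of_true h01.symm (by decide)
        | exact iff_of_true h12 (by decide) | exact iff_of_true h12.symm (by decide)
        | exact iff_of_true h23 (by decide) | exact iff_of_true h23.symm (by decide)
        | exact iff_of_true h34 (by decide) | exact iff_of_true h34.symm (by decide)
        | exact iff_of_false n02 (by decide) | exact iff_of_false (fun h => n02 h.symm) (by decide)
        | exact iff_of_false n03 (by decide) | exact iff_of_false (fun h => n03 h.symm) (by decide)
        | exact iff_of_false n04 (by decide) | exact iff_of_false (fun h => n04 h.symm) (by decide)
        | exact iff_of_false n13 (by decide) | exact iff_of_false (fun h => n13 h.symm) (by decide)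
        | exact iff_of_false n14 (by decide) | exact iff_of_false (fun h => n14 h.symm) (by decide)
        | exact iff_of_false n24 (by decide) | exact iff_of_false (fun h => n24 h.symm) (by decide)⟩

lemma p3iso {V : Type*} {G : SimpleGraph V} {a b c : V}
    (hab : G.Adj a b) (hbc : G.Adj b c) (hac : ¬G.Adj a c) (hace : a ≠ c) :
    Nonempty (G.induce ({a, b, c} : Set V) ≃g SimpleGraph.pathGraph 3) := by
  have hA : a ∈ ({a, b, c} : Set V) := by simp
  have hB : b ∈ ({a, b, c} : Set V) := by simp
  have hC : c ∈ ({a, b, c} : Set V) := by simp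
  let f : Fin 3 → ({a, b, c} : Set V) := ![⟨a, hA⟩, ⟨b, hB⟩, ⟨c, hC⟩]
  have hinj : Function.Injective f := by
    intro i j hij
    fin_cases i <;> fin_cases j <;> simp_all [f, Subtype.ext_iff] <;>
      first
        | rfl
        | exact absurd hij hab.ne | exact absurd hij.symm hab.ne
        | exact absurd hij hbc.ne | exact absurd hij.symm hbc.ne
        | exact absurd hij hace | exact absurd hij.symm hace
  have hsurj : Function.Surjective f := by
    rintro ⟨x, hx⟩
    rcases hx with h | h | h
    · exact ⟨0, by simp [f, h]⟩
    · exact ⟨1, by simp [f, h]⟩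
    · simp only [Set.mem_singleton_iff] at h
      exact ⟨2, by simp [f, h]⟩
  refine ⟨(RelIso.mk (Equiv.ofBijective f ⟨hinj, hsurj⟩) ?_).symm⟩
  intro i j
  show G.Adj _ _ ↔ _
  fin_cases i <;> fin_cases j <;>
    simp only [f, pathGraph_adj, Equiv.ofBijective, Matrix.cons_val_zero, Matrix.cons_val_one,
      Matrix.head_cons, Matrix.cons_val_two, Matrix.tail_cons, SimpleGraph.comap_adj,
      Function.Embedding.coe_subtype] <;>
    first
      | exact iff_of_false (G.irrefl) (by decide)
      | exact iff_of_true hab (by decide) | exact iff_of_true hab.symm (by decide)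
      | exact iff_of_true hbc (by decide) | exact iff_of_true hbc.symm (by decide)
      | exact iff_of_false hac (by decide) | exact iff_of_false (fun h => hac h.symm) (by decide)

/-- connectivity within a set of vertices -/
def Conn {V : Type*} (G : SimpleGraph V) (D : Set V) : V → V → Prop :=
  Relation.ReflTransGen (fun u v => u ∈ D ∧ v ∈ D ∧ G.Adj u v)

lemma conn_symm {V : Type*} {G : SimpleGraph V} {D : Set V} {x y : V}
    (h : Conn G D x y) : Conn G D y x :=
  (@Relation.ReflTransGen.stdSymm _ (fun u v => u ∈ D ∧ v ∈ D ∧ G.Adj u v)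
    ⟨fun _ _ ⟨hu, hv, h⟩ => ⟨hv, hu, h.symm⟩⟩).symm _ _ h

lemma conn_single {V : Type*} {G : SimpleGraph V} {D : Set V} {u v : V}
    (hu : u ∈ D) (hv : v ∈ D) (h : G.Adj u v) : Conn G D u v :=
  Relation.ReflTransGen.single ⟨hu, hv, h⟩

lemma conn_erase {V : Type*} {G : SimpleGraph V} {D : Finset V} {w x : V}
    (hconnD : ∀ u ∈ D, ∀ y ∈ D, Conn G ↑D u y) (hx : x ∈ D)
    (hcut : ∀ d ∈ D, d ≠ w → G.Adj d w → Conn G (↑D \ {w}) d x) :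
    ∀ u ∈ D, u ≠ w → Conn G (↑D \ {w}) u x := by
  have H : ∀ u : V, Conn G ↑D u x → u ∈ D → u ≠ w → Conn G (↑D \ {w}) u x := by
    intro u h
    induction h using Relation.ReflTransGen.head_induction_on with
    | refl => intro _ _; exact Relation.ReflTransGen.refl
    | @head a cc h' hcx ih =>
      intro ha haw
      obtain ⟨haD, hcD, hadj⟩ := h'
      rw [Finset.mem_coe] at haD hcD
      by_cases hcw : cc = w
      · exact hcut _ haD haw (hcw ▸ hadj)
      · exact Relation.ReflTransGen.head
          ⟨⟨Finset.mem_coe.2 haD, by simp [haw]⟩, ⟨Finset.mem_coe.2 hcD, by simp [hcw]⟩, hadj⟩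
          (ih hcD hcw)
  exact fun u hu huw => H u (hconnD u hu x hx) hu huw

lemma exP3 {V : Type*} {G : SimpleGraph V} {D : Set V} {a c : V}
    (h : Conn G D a c) (hac : ¬G.Adj a c) (hane : a ≠ c) :
    ∃ x ∈ D, ∃ y ∈ D, ∃ z ∈ D, G.Adj x y ∧ G.Adj y z ∧ ¬G.Adj x z ∧ x ≠ z := by
  have H : ∀ u : V, Conn G D u c → ¬G.Adj u c → u ≠ c →
      ∃ x ∈ D, ∃ y ∈ D, ∃ z ∈ D, G.Adj x y ∧ G.Adj y z ∧ ¬G.Adj x z ∧ x ≠ z := by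
    intro u h
    induction h using Relation.ReflTransGen.head_induction_on with
    | refl => intro _ hne; exact absurd rfl hne
    | @head u y h' hyc ih =>
      intro huc hune
      obtain ⟨huD, hyD, hadj⟩ := h'
      by_cases hyc' : G.Adj y c
      · -- u - y - c is an induced P3; need c ∈ D
        have hcD : c ∈ D := by
          rcases (Relation.ReflTransGen.cases_head hyc) with h | ⟨b, ⟨_, hbD, _⟩, _⟩
          · rw [← h]; exact hyD
          ·
            rcases Relation.ReflTransGen.cases_tail hyc with h | ⟨b, _, ⟨_, hcD, _⟩⟩
            · rw [h]; exact hyD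
            · exact hcD
        exact ⟨u, huD, _, hyD, c, hcD, hadj, hyc', huc, hune⟩
      · by_cases hyne : y = c
        · exact absurd (hyne ▸ hadj) huc
        · exact ih hyc' hyne
  exact H a h hac hane

def Good {V : Type*} (G : SimpleGraph V) (D : Finset V) : Prop :=
  (∀ v, ∃ d ∈ D, v = d ∨ G.Adj v d) ∧ (∀ x ∈ D, ∀ y ∈ D, Conn G ↑D x y)

lemma lemA {V : Type*} {G : SimpleGraph V} {D : Finset V} (hD : Good G D)
    (hmin : ∀ D' : Finset V, Good G D' → D.card ≤ D'.card)
    {w x : V} (hw : w ∈ D) (hx : x ∈ D) (hxw : x ≠ w) :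
    (∃ p, p ∉ D ∧ G.Adj p w ∧ ∀ u ∈ D, u ≠ w → ¬G.Adj p u) ∨
    (∃ d ∈ D, d ≠ w ∧ G.Adj d w ∧ ¬Conn G (↑D \ {w}) d x) := by
  classical
  by_cases hdom : ∀ v : V, ∃ d ∈ D, d ≠ w ∧ (v = d ∨ G.Adj v d)
  · by_cases hcut : ∀ d ∈ D, d ≠ w → G.Adj d w → Conn G (↑D \ {w}) d x
    · exfalso
      have hconn' := conn_erase hD.2 hx hcut
      have hGood : Good G (D.erase w) := by
        constructor
        · intro v
          obtain ⟨d, hd, hdw, hv⟩ := hdom v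
          exact ⟨d, Finset.mem_erase.2 ⟨hdw, hd⟩, hv⟩
        · intro u hu y hy
          rw [Finset.mem_erase] at hu hy
          have h1 := hconn' u hu.2 hu.1
          have h2 := hconn' y hy.2 hy.1
          have hcoe : (↑(D.erase w) : Set V) = ↑D \ {w} := by
            simp [Finset.coe_erase]
          rw [hcoe]
          exact h1.trans (conn_symm h2)
      have h1 := hmin _ hGood
      have h2 := Finset.card_erase_lt_of_mem hw
      omega
    · push_neg at hcut
      obtain ⟨d, hd, hdw, hadj, hnconn⟩ := hcut
      exact Or.inr ⟨d, hd, hdw, hadj, hnconn⟩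
  · push_neg at hdom
    obtain ⟨v, hv⟩ := hdom
    obtain ⟨d, hd, hvd⟩ := hD.1 v
    have hdw : d = w := by
      by_contra h
      rcases hvd with h' | h'
      exacts [(hv d hd h).1 h', (hv d hd h).2 h']
    rw [hdw] at hvd
    rcases hvd with rfl | hadj
    · exfalso
      have hc := hD.2 v hw x hx
      rcases Relation.ReflTransGen.cases_head hc with heq | ⟨b, ⟨_, hbD, hadj⟩, _⟩
      · exact hxw heq.symm
      · exact (hv b (Finset.mem_coe.1 hbD) hadj.ne').2 hadj
    · have hvD : v ∉ D := by
        intro hvD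
        have hvw : v ≠ w := fun h => G.irrefl (h ▸ hadj)
        exact (hv v hvD hvw).1 rfl
      refine Or.inl ⟨v, hvD, hadj, ?_⟩
      intro u hu huw hadj'
      exact (hv u hu huw).2 hadj'

theorem dominating_P3_or_clique_in_P5_free
    {V : Type*} [Fintype V] [Nonempty V] (G : SimpleGraph V)
    (hconn : G.Connected) (hP5 : P5Free G) :
    ∃ D : Set V,
      (∀ v : V, v ∈ D ∨ ∃ d ∈ D, G.Adj v d) ∧
      (Nonempty (G.induce D ≃g SimpleGraph.pathGraph 3) ∨ G.IsClique D) := by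
  classical
  -- universe is a good set
  have huniv : Good G (Finset.univ : Finset V) := by
    constructor
    · exact fun v => ⟨v, Finset.mem_univ v, Or.inl rfl⟩
    · intro x _ y _
      obtain ⟨wlk⟩ := hconn.preconnected x y
      induction wlk with
      | nil => exact Relation.ReflTransGen.refl
      | cons h p ih =>
        exact Relation.ReflTransGen.head ⟨by simp, by simp, h⟩
          (ih (Finset.mem_univ _) (Finset.mem_univ _))
  have hex : ∃ n, ∃ D : Finset V, Good G D ∧ D.card = n := ⟨_, Finset.univ, huniv, rfl⟩
  obtain ⟨D, hGood, hcard⟩ := Nat.find_spec hex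
  have hmin : ∀ D' : Finset V, Good G D' → D.card ≤ D'.card := by
    intro D' h'
    rw [hcard]
    exact Nat.find_min' hex ⟨D', h', rfl⟩
  have hdomconv : ∀ v : V, v ∈ (↑D : Set V) ∨ ∃ d ∈ (↑D : Set V), G.Adj v d := by
    intro v
    obtain ⟨d, hd, h⟩ := hGood.1 v
    rcases h with rfl | h
    · exact Or.inl (Finset.mem_coe.2 hd)
    · exact Or.inr ⟨d, Finset.mem_coe.2 hd, h⟩
  by_cases hclique : G.IsClique (↑D : Set V)
  · exact ⟨↑D, hdomconv, Or.inr hclique⟩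
  -- find an induced P3 a-b-c inside D
  rw [SimpleGraph.isClique_iff, Set.Pairwise] at hclique
  push_neg at hclique
  obtain ⟨a0, ha0D, c0, hc0D, hne0, hnadj0⟩ := hclique
  obtain ⟨a, haD', b, hbD', c, hcD', hab, hbc, hac, hacne⟩ :=
    exP3 (hGood.2 a0 (Finset.mem_coe.1 ha0D) c0 (Finset.mem_coe.1 hc0D)) hnadj0 hne0
  rw [Finset.mem_coe] at haD' hbD' hcD'
  rename' haD' => haD, hbD' => hbD, hcD' => hcD
  -- helper for memberships in D \ {w}
  have hmem : ∀ (w u : V), u ∈ D → u ≠ w → u ∈ (↑D \ {w} : Set V) :=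
    fun w u hu huw => ⟨Finset.mem_coe.2 hu, by simp [huw]⟩
  -- no induced P4 inside D
  have hP4 : ∀ w x y z : V, w ∈ D → x ∈ D → y ∈ D → z ∈ D →
      G.Adj w x → G.Adj x y → G.Adj y z →
      ¬G.Adj w y → ¬G.Adj w z → ¬G.Adj x z → False := by
    intro w x y z hwD hxD hyD hzD hwx hxy hyz nwy nwz nxz
    have hxw : x ≠ w := hwx.ne'
    have hyw : y ≠ w := fun h => nwz (h ▸ hyz)
    have hzw : z ≠ w := fun h => nxz (by rw [h]; exact hwx.symm)
    rcases lemA hGood hmin hwD hxD hxw with ⟨p, hpD, hpw, hp⟩ | ⟨d, hdD, hdw, hdwadj, hnc⟩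
    · exact no_p5aux hP5 hpw hwx hxy hyz (hp x hxD hxw) (hp y hyD hyw) (hp z hzD hzw)
        nwy nwz nxz
    · have ndx : ¬G.Adj d x := fun h =>
        hnc (conn_single (hmem w d hdD hdw) (hmem w x hxD hxw) h)
      have ndy : ¬G.Adj d y := fun h =>
        hnc (Relation.ReflTransGen.head ⟨hmem w d hdD hdw, hmem w y hyD hyw, h⟩
          (conn_single (hmem w y hyD hyw) (hmem w x hxD hxw) hxy.symm))
      have ndz : ¬G.Adj d z := fun h =>
        hnc (Relation.ReflTransGen.head ⟨hmem w d hdD hdw, hmem w z hzD hzw, h⟩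
          (Relation.ReflTransGen.head ⟨hmem w z hzD hzw, hmem w y hyD hyw, hyz.symm⟩
            (conn_single (hmem w y hyD hyw) (hmem w x hxD hxw) hxy.symm)))
      exact no_p5aux hP5 hdwadj hwx hxy hyz ndx ndy ndz nwy nwz nxz
  have hba : b ≠ a := hab.ne'
  have hcb : c ≠ b := hbc.ne'
  have hca : c ≠ a := Ne.symm hacne
  -- private neighbor of a
  have hpaE : ∃ p, p ∉ D ∧ G.Adj p a ∧ ∀ u ∈ D, u ≠ a → ¬G.Adj p u := by
    rcases lemA hGood hmin haD hbD hba with h | ⟨d, hdD, hda, hdaadj, hnc⟩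
    · exact h
    · exfalso
      have ndb : ¬G.Adj d b := fun h =>
        hnc (conn_single (hmem a d hdD hda) (hmem a b hbD hba) h)
      have ndc : ¬G.Adj d c := fun h =>
        hnc (Relation.ReflTransGen.head ⟨hmem a d hdD hda, hmem a c hcD hca, h⟩
          (conn_single (hmem a c hcD hca) (hmem a b hbD hba) hbc.symm))
      exact hP4 d a b c hdD haD hbD hcD hdaadj hab hbc ndb ndc hac
  -- private neighbor of c
  have hpcE : ∃ p, p ∉ D ∧ G.Adj p c ∧ ∀ u ∈ D, u ≠ c → ¬G.Adj p u := by
    rcases lemA hGood hmin hcD hbD hcb.symm with h | ⟨d, hdD, hdc, hdcadj, hnc⟩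
    · exact h
    · exfalso
      have ndb : ¬G.Adj d b := fun h =>
        hnc (conn_single (hmem c d hdD hdc) (hmem c b hbD hcb.symm) h)
      have nda : ¬G.Adj d a := fun h =>
        hnc (Relation.ReflTransGen.head ⟨hmem c d hdD hdc, hmem c a haD hacne, h⟩
          (conn_single (hmem c a haD hacne) (hmem c b hbD hcb.symm) hab))
      exact hP4 d c b a hdD hcD hbD haD hdcadj hbc.symm hab.symm ndb nda
        (fun h => hac h.symm)
  obtain ⟨pa, hpaD, hpaa, hpa⟩ := hpaE
  obtain ⟨pc, hpcD, hpcc, hpc⟩ := hpcE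
  have npab : ¬G.Adj pa b := hpa b hbD hba
  have npac : ¬G.Adj pa c := hpa c hcD hca
  have npca : ¬G.Adj pc a := hpc a haD hacne
  have npcb : ¬G.Adj pc b := hpc b hbD hcb.symm
  have hpapc : G.Adj pa pc := by
    by_contra h
    exact no_p5aux hP5 hpaa hab hbc hpcc.symm npab npac h hac
      (fun h' => npca h'.symm) (fun h' => npcb h'.symm)
  by_cases hD3 : ∀ u ∈ D, u = a ∨ u = b ∨ u = c
  · -- D = {a, b, c}: the P3 case
    have hset : (↑D : Set V) = ({a, b, c} : Set V) := by
      ext u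
      constructor
      · intro hu
        rcases hD3 u (Finset.mem_coe.1 hu) with rfl | rfl | rfl <;> simp
      · rintro (rfl | rfl | rfl)
        exacts [Finset.mem_coe.2 haD, Finset.mem_coe.2 hbD, Finset.mem_coe.2 hcD]
    refine ⟨↑D, hdomconv, Or.inl ?_⟩
    rw [hset]
    exact (p3iso hab hbc hac hacne).some |> fun iso => ⟨iso⟩
  · push_neg at hD3
    obtain ⟨d, hdD, hda, hdb, hdc⟩ := hD3
    exfalso
    -- every vertex of D outside {a,b,c} adjacent to one of them is adjacent to a and c
    have hC1 : ∀ e, e ∈ D → e ≠ a → e ≠ b → e ≠ c →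
        (G.Adj e a ∨ G.Adj e b ∨ G.Adj e c) → G.Adj e a ∧ G.Adj e c := by
      intro e heD hea heb hec hsome
      have hepa : ¬G.Adj pa e := hpa e heD hea
      have hepc : ¬G.Adj pc e := hpc e heD hec
      by_cases h1 : G.Adj e a <;> by_cases h2 : G.Adj e c
      · exact ⟨h1, h2⟩
      · by_cases h3 : G.Adj e b
        · exact absurd (no_p5aux hP5 hpapc hpcc hbc.symm h3.symm npac npab hepa npcb hepc
            (fun h => h2 h.symm)) not_false
        · exact absurd (hP4 e a b c heD haD hbD hcD h1 hab hbc h3 h2 hac) not_false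
      · by_cases h3 : G.Adj e b
        · exact absurd (no_p5aux hP5 hpapc.symm hpaa hab h3.symm npca npcb hepc npab hepa
            (fun h => h1 h.symm)) not_false
        · exact absurd (hP4 e c b a heD hcD hbD haD h2 hbc.symm hab.symm h3 h1
            (fun h => hac h.symm)) not_false
      · have h3 : G.Adj e b := by tauto
        exact absurd (no_p5aux hP5 h3 hab.symm hpaa.symm hpapc h1
          (fun h => hepa h.symm) (fun h => hepc h.symm)
          (fun h => npab h.symm) (fun h => npcb h.symm) (fun h => npca h.symm)) not_false
    have hC2 : ∀ e, e ∈ D → e ≠ a → e ≠ b → e ≠ c → G.Adj e a ∧ G.Adj e c := by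
      intro e heD hea heb hec
      have H : ∀ u : V, Conn G ↑D u a → u ∈ D →
          (u = a ∨ u = b ∨ u = c ∨ (G.Adj u a ∧ G.Adj u c)) := by
        intro u h
        induction h using Relation.ReflTransGen.head_induction_on with
        | refl => intro _; exact Or.inl rfl
        | @head u y h' hya ih =>
          intro huD
          obtain ⟨huD', hyD', hadj⟩ := h'
          by_cases hua : u = a
          · exact Or.inl hua
          by_cases hub : u = b
          · exact Or.inr (Or.inl hub)
          by_cases huc : u = c
          · exact Or.inr (Or.inr (Or.inl huc))
          refine Or.inr (Or.inr (Or.inr ?_))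
          by_cases hsome : G.Adj u a ∨ G.Adj u b ∨ G.Adj u c
          · exact hC1 u huD hua hub huc hsome
          · push_neg at hsome
            rcases ih (Finset.mem_coe.1 hyD') with rfl | rfl | rfl | ⟨hya', hyc'⟩
            · exact absurd hadj hsome.1
            · exact absurd hadj hsome.2.1
            · exact absurd hadj hsome.2.2
            · have hpay : ¬G.Adj pa y := hpa y (Finset.mem_coe.1 hyD') hya'.ne
              have hpcy : ¬G.Adj pc y := hpc y (Finset.mem_coe.1 hyD') hyc'.ne
              exact absurd (no_p5aux hP5 hadj hya' hpaa.symm hpapc hsome.1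
                (fun h => (hpa u huD hua) h.symm) (fun h => (hpc u huD huc) h.symm)
                (fun h => hpay h.symm) (fun h => hpcy h.symm)
                (fun h => npca h.symm)) not_false
      rcases H e (hGood.2 e heD a haD) heD with rfl | rfl | rfl | h
      · exact absurd rfl hea
      · exact absurd rfl heb
      · exact absurd rfl hec
      · exact h
    obtain ⟨hda', hdc'⟩ := hC2 d hdD hda hdb hdc
    -- remove b
    rcases lemA hGood hmin hbD haD hab.ne with ⟨pb, hpbD, hpbb, hpb⟩ |
      ⟨d', hd'D, hd'b, hd'badj, hnc⟩
    · have npba : ¬G.Adj pb a := hpb a haD hab.ne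
      have npbc : ¬G.Adj pb c := hpb c hcD hcb
      have npbd : ¬G.Adj pb d := hpb d hdD hdb
      by_cases h1 : G.Adj pb pc
      · exact no_p5aux hP5 hda'.symm hdc' hpcc.symm h1.symm hac
          (fun h => npca h.symm) (fun h => npba h.symm)
          (fun h => (hpc d hdD hdc) h.symm) (fun h => npbd h.symm)
          (fun h => npbc h.symm)
      · by_cases h2 : G.Adj pb pa
        · exact no_p5aux hP5 hdc'.symm hda' hpaa.symm h2.symm (fun h => hac h.symm)
            (fun h => npac h.symm) (fun h => npbc h.symm)
            (fun h => (hpa d hdD hda) h.symm) (fun h => npbd h.symm)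
            (fun h => npba h.symm)
        · exact no_p5aux hP5 hpbb hbc hpcc.symm hpapc.symm npbc h1 h2
            (fun h => npcb h.symm) (fun h => npab h.symm) (fun h => npac h.symm)
    · by_cases h1 : d' = a
      · exact hnc (h1 ▸ Relation.ReflTransGen.refl)
      by_cases h2 : d' = c
      · subst h2
        exact hnc (Relation.ReflTransGen.head
          ⟨hmem b d' hd'D hd'b, hmem b d hdD hdb, hdc'.symm⟩
          (conn_single (hmem b d hdD hdb) (hmem b a haD hab.ne) hda'))
      · exact hnc (conn_single (hmem b d' hd'D hd'b) (hmem b a haD hab.ne)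
          (hC2 d' hd'D h1 hd'b h2).1)
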